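/- Let G = Lφ + g with φ continuous convex differentiable and g proper lsc convex, let F = G − H with H convex continuous. Suppose x^{k_j} → x*, y^{k_j−1} → x*, ξ^{k_j−1} → ξ*, and x^{k_j} minimizes z ↦ G(z) − ⟨L∇φ(y^{k_j−1}) − ∇f(y^{k_j−1}) + ξ^{k_j−1}, z⟩ with ∇f continuous. Then limsup_j G(x^{k_j}) ≤ G(x*), and consequently F(x^{k_j}) → F(x*). -/

import Mathlib

open Filter Topology

theorem stmt17 {E : Type*} [NormedAddCommGroup E] [InnerProductSpace ℝ E]
    [FiniteDimensional ℝ E]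
    (f g h φ H : E → ℝ) (L : ℝ) (hL : 0 < L)
    (hφ : ContDiff ℝ 1 φ) (hφconv : ConvexOn ℝ Set.univ φ)
    (hg : ConvexOn ℝ Set.univ g) (hglsc : LowerSemicontinuous g)
    (hH : ConvexOn ℝ Set.univ H) (hHcont : Continuous H)
    (hf : ContDiff ℝ 1 f)
    (G : E → ℝ) (hG : G = fun z => L * φ z + g z)
    (F : E → ℝ) (hF : F = fun z => G z - H z)
    (xj yj ξj : ℕ → E) (xstar ξstar : E)
    (hxj : Tendsto xj atTop (nhds xstar))
    (hyj : Tendsto yj atTop (nhds xstar))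
    (hξj : Tendsto ξj atTop (nhds ξstar))
    (hmin : ∀ j : ℕ, ∀ z : E,
      G (xj j) - (inner ℝ (L • gradient φ (yj j) - gradient f (yj j) + ξj j) (xj j) : ℝ)
        ≤ G z - (inner ℝ (L • gradient φ (yj j) - gradient f (yj j) + ξj j) z : ℝ)) :
    limsup (fun j => G (xj j)) atTop ≤ G xstar ∧
    Tendsto (fun j => F (xj j)) atTop (nhds (F xstar)) := by
  -- continuity of gradients
  have hgradφ : Continuous (gradient φ) := by
    unfold gradient
    exact (InnerProductSpace.toDual ℝ E).symm.continuous.comp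
      (hφ.continuous_fderiv one_ne_zero)
  have hgradf : Continuous (gradient f) := by
    unfold gradient
    exact (InnerProductSpace.toDual ℝ E).symm.continuous.comp
      (hf.continuous_fderiv one_ne_zero)
  set v : ℕ → E := fun j => L • gradient φ (yj j) - gradient f (yj j) + ξj j with hv
  have hvlim : Tendsto v atTop
      (nhds (L • gradient φ xstar - gradient f xstar + ξstar)) := by
    apply Tendsto.add _ hξj
    exact ((hgradφ.tendsto xstar).comp hyj).const_smul L |>.sub
      ((hgradf.tendsto xstar).comp hyj)
  -- u j → 0
  have hulim : Tendsto (fun j => (inner ℝ (v j) (xj j - xstar) : ℝ)) atTop (nhds 0) := by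
    have : Tendsto (fun j => xj j - xstar) atTop (nhds 0) := by
      simpa [sub_self] using hxj.sub (tendsto_const_nhds (x := xstar))
    have h := hvlim.inner this (𝕜 := ℝ)
    simpa using h
  -- upper bound
  have hub : ∀ j, G (xj j) ≤ G xstar + (inner ℝ (v j) (xj j - xstar) : ℝ) := by
    intro j
    have := hmin j xstar
    rw [inner_sub_right]
    linarith
  -- G lower semicontinuous
  have hGlsc : LowerSemicontinuous G := by
    rw [hG]
    exact ((continuous_const.mul hφ.continuous).lowerSemicontinuous).add hglsc
  -- Tendsto G (xj j) → G xstar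
  have hGt : Tendsto (fun j => G (xj j)) atTop (nhds (G xstar)) := by
    rw [tendsto_order]
    constructor
    · intro a ha
      exact hxj.eventually (hGlsc xstar a ha)
    · intro b hb
      have : ∀ᶠ j in atTop, (inner ℝ (v j) (xj j - xstar) : ℝ) < b - G xstar := by
        have := hulim (Iio_mem_nhds (by linarith : (0:ℝ) < b - G xstar))
        simpa using this
      filter_upwards [this] with j hj
      have := hub j
      linarith
  refine ⟨?_, ?_⟩
  · exact le_of_eq hGt.limsup_eq
  · rw [hF]
    exact hGt.sub ((hHcont.tendsto xstar).comp hxj)
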